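/- arXiv:1806.09717 — 2 statements merged into one kernel-verified Lean document; each statement's English description precedes it below -/
import Mathlib

section
/- For every integer n ≥ 3, the number p_{3×n} of multiple self-avoiding polygons in the 3×n grid satisfies 14·(7/2)^(n−3) − 1 ≤ p_{3×n} ≤ 14·(11/3)^(n−3) − 1. -/
/-- Adjacency in the `m × n` grid graph: two lattice points at Euclidean distance 1. -/
def gridAdj (m n : ℕ) (a b : Fin m × Fin n) : Prop :=
  (a.1 = b.1 ∧ ((a.2 : ℕ) + 1 = (b.2 : ℕ) ∨ (b.2 : ℕ) + 1 = (a.2 : ℕ))) ∨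
  (a.2 = b.2 ∧ ((a.1 : ℕ) + 1 = (b.1 : ℕ) ∨ (b.1 : ℕ) + 1 = (a.1 : ℕ)))

instance (m n : ℕ) (a b : Fin m × Fin n) : Decidable (gridAdj m n a b) := by
  unfold gridAdj; infer_instance

/-- The `m × n` grid graph on vertex set `{1,…,m} × {1,…,n}`. -/
def gridGraph (m n : ℕ) : SimpleGraph (Fin m × Fin n) where
  Adj := gridAdj m n
  symm := by constructor; intro a b h; unfold gridAdj at *; tauto
  loopless := by
    constructor; intro a h
    rcases h with ⟨_, h⟩ | ⟨_, h⟩ <;> omega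

instance (m n : ℕ) : DecidableRel (gridGraph m n).Adj :=
  fun a b => inferInstanceAs (Decidable (gridAdj m n a b))

/-- The set of multiple self-avoiding polygons in the `m × n` grid:
nonempty edge subsets of the grid graph in which every vertex has degree 0 or 2. -/
def msapFinset (m n : ℕ) : Finset (Finset (Sym2 (Fin m × Fin n))) :=
  ((gridGraph m n).edgeFinset.powerset).filter
    (fun S => S ≠ ∅ ∧ ∀ v : Fin m × Fin n,
      (S.filter (fun e => v ∈ e)).card = 0 ∨ (S.filter (fun e => v ∈ e)).card = 2)

/-- `p_{m×n}`, the number of multiple self-avoiding polygons in the `m × n` grid. -/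
def msapCount (m n : ℕ) : ℕ := (msapFinset m n).card

namespace MSAP
open Finset

/-- number of vertical edges at row `i` in a column with vertical edge set `V`. -/
def vCount (V : Finset (Fin 2)) (i : Fin 3) : ℕ :=
  (V.filter (fun k => i = k.castSucc ∨ i = k.succ)).card

/-- degree condition for the last column: left-horizontals `B`, boundary `A`, verticals `V`. -/
def okV (B A : Finset (Fin 3)) (V : Finset (Fin 2)) : Prop :=
  ∀ i : Fin 3,
    (if i ∈ B then 1 else 0) + (if i ∈ A then 1 else 0) + vCount V i = 0 ∨
    (if i ∈ B then 1 else 0) + (if i ∈ A then 1 else 0) + vCount V i = 2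

instance (B A : Finset (Fin 3)) : DecidablePred (okV B A) := by
  unfold okV; infer_instance

def nOk (B A : Finset (Fin 3)) : ℕ := (Finset.univ.filter (okV B A)).card

/-- degree of `v` in `S` plus the boundary pending edge from `A` at the last column. -/
def bdeg (n : ℕ) (A : Finset (Fin 3)) (S : Finset (Sym2 (Fin 3 × Fin n))) (v : Fin 3 × Fin n) : ℕ :=
  (S.filter (fun e => v ∈ e)).card + (if (v.2 : ℕ) + 1 = n ∧ v.1 ∈ A then 1 else 0)

def gridConf (n : ℕ) (A : Finset (Fin 3)) : Finset (Finset (Sym2 (Fin 3 × Fin n))) :=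
  ((gridGraph 3 n).edgeFinset.powerset).filter
    (fun S => ∀ v : Fin 3 × Fin n, bdeg n A S v = 0 ∨ bdeg n A S v = 2)

lemma msap_card (n : ℕ) : msapCount 3 n + 1 = (gridConf n ∅).card := by
  have h1 : gridConf n ∅ = insert ∅ (msapFinset 3 n) := by
    ext S
    simp only [gridConf, msapFinset, mem_filter, mem_insert, mem_powerset, bdeg,
      Finset.notMem_empty, and_false, if_false, add_zero]
    by_cases hS : S = ∅
    · subst hS; simp
    · simp only [hS, ne_eq, not_false_iff, true_and, false_or]
  have h2 : (∅ : Finset (Sym2 (Fin 3 × Fin n))) ∉ msapFinset 3 n := by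
    simp [msapFinset]
  rw [h1, card_insert_of_notMem h2, msapCount]

lemma base1 : ∀ A : Finset (Fin 3), (gridConf 1 A).card = nOk ∅ A := by
  decide

section Peel
variable (n : ℕ)

/-- embed the first `n+1` columns into the `n+2`-column grid. -/
def emb : Fin 3 × Fin (n + 1) → Fin 3 × Fin (n + 2) := fun p => (p.1, p.2.castSucc)

lemma emb_inj : Function.Injective (emb n) := by
  intro a b h
  have h1 := congrArg Prod.fst h
  have h2 := congrArg Prod.snd h
  simp only [emb] at h1 h2
  exact Prod.ext h1 (Fin.castSucc_injective _ h2)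

/-- embed edges. -/
def semb : Sym2 (Fin 3 × Fin (n + 1)) → Sym2 (Fin 3 × Fin (n + 2)) := Sym2.map (emb n)

lemma semb_inj : Function.Injective (semb n) := Sym2.map.injective (emb_inj n)

def colN : Fin (n + 2) := ⟨n, by omega⟩
def colN1 : Fin (n + 2) := ⟨n + 1, by omega⟩

/-- last-gap horizontal edge in row `i`. -/
def hEdge (i : Fin 3) : Sym2 (Fin 3 × Fin (n + 2)) := s((i, colN n), (i, colN1 n))

/-- last-column vertical edge number `k`. -/
def vEdge (k : Fin 2) : Sym2 (Fin 3 × Fin (n + 2)) :=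
  s((k.castSucc, colN1 n), (k.succ, colN1 n))

lemma semb_col_le {x : Fin 3 × Fin (n + 2)} {e : Sym2 (Fin 3 × Fin (n + 1))}
    (hx : x ∈ semb n e) : (x.2 : ℕ) ≤ n := by
  rcases Sym2.mem_map.mp hx with ⟨a, _, rfl⟩
  simp [emb]
  omega

lemma mem_semb_iff (w : Fin 3 × Fin (n + 1)) (e : Sym2 (Fin 3 × Fin (n + 1))) :
    emb n w ∈ semb n e ↔ w ∈ e := by
  constructor
  · intro h
    rcases Sym2.mem_map.mp h with ⟨a, ha, hae⟩
    rwa [emb_inj n hae] at ha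
  · intro h
    exact Sym2.mem_map.mpr ⟨w, h, rfl⟩

lemma mem_hEdge_iff (x : Fin 3 × Fin (n + 2)) (i : Fin 3) :
    x ∈ hEdge n i ↔ x = (i, colN n) ∨ x = (i, colN1 n) := Sym2.mem_iff

lemma mem_vEdge_iff (x : Fin 3 × Fin (n + 2)) (k : Fin 2) :
    x ∈ vEdge n k ↔ x = (k.castSucc, colN1 n) ∨ x = (k.succ, colN1 n) := Sym2.mem_iff

lemma semb_edge (e : Sym2 (Fin 3 × Fin (n + 1))) :
    semb n e ∈ (gridGraph 3 (n + 2)).edgeFinset ↔ e ∈ (gridGraph 3 (n + 1)).edgeFinset := by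
  induction e using Sym2.ind with
  | _ a b =>
    simp only [semb, Sym2.map_pair_eq, SimpleGraph.mem_edgeFinset, SimpleGraph.mem_edgeSet]
    show gridAdj _ _ _ _ ↔ gridAdj _ _ _ _
    simp only [gridAdj, emb, Fin.ext_iff, Fin.coe_castSucc]

lemma hEdge_edge (i : Fin 3) : hEdge n i ∈ (gridGraph 3 (n + 2)).edgeFinset := by
  simp only [hEdge, SimpleGraph.mem_edgeFinset, SimpleGraph.mem_edgeSet]
  show gridAdj _ _ _ _
  simp only [gridAdj, colN, colN1, Fin.ext_iff]
  simp

lemma vEdge_edge (k : Fin 2) : vEdge n k ∈ (gridGraph 3 (n + 2)).edgeFinset := by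
  simp only [vEdge, SimpleGraph.mem_edgeFinset, SimpleGraph.mem_edgeSet]
  show gridAdj _ _ _ _
  simp only [gridAdj, colN1, Fin.ext_iff, Fin.coe_castSucc, Fin.val_succ]
  simp

lemma hEdge_ne_semb (i : Fin 3) (e : Sym2 (Fin 3 × Fin (n + 1))) : hEdge n i ≠ semb n e := by
  intro h
  have : ((i, colN1 n) : Fin 3 × Fin (n + 2)) ∈ semb n e := by
    rw [← h, mem_hEdge_iff]; right; rfl
  have := semb_col_le n this
  simp [colN1] at this

lemma vEdge_ne_semb (k : Fin 2) (e : Sym2 (Fin 3 × Fin (n + 1))) : vEdge n k ≠ semb n e := by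
  intro h
  have : ((k.castSucc, colN1 n) : Fin 3 × Fin (n + 2)) ∈ semb n e := by
    rw [← h, mem_vEdge_iff]; left; rfl
  have := semb_col_le n this
  simp [colN1] at this

lemma hEdge_ne_vEdge (i : Fin 3) (k : Fin 2) : hEdge n i ≠ vEdge n k := by
  intro h
  have : ((i, colN n) : Fin 3 × Fin (n + 2)) ∈ vEdge n k := by
    rw [← h, mem_hEdge_iff]; left; rfl
  rw [mem_vEdge_iff] at this
  rcases this with h' | h' <;>
    · have := congrArg (fun x => ((x.2 : Fin (n+2)) : ℕ)) h'
      simp [colN, colN1] at this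

lemma hEdge_injective : Function.Injective (hEdge n) := by
  intro i j h
  rw [hEdge, hEdge, Sym2.eq_iff] at h
  rcases h with ⟨h1, _⟩ | ⟨h1, _⟩
  · exact (Prod.ext_iff.mp h1).1
  · have := (Prod.ext_iff.mp h1).2
    have := congrArg Fin.val this
    simp [colN, colN1] at this

lemma vEdge_injective : Function.Injective (vEdge n) := by
  intro k l h
  rw [vEdge, vEdge, Sym2.eq_iff] at h
  rcases h with ⟨h1, _⟩ | ⟨h1, h2⟩
  · have := (Prod.ext_iff.mp h1).1
    exact Fin.castSucc_injective _ this
  · have e1 := congrArg Fin.val (Prod.ext_iff.mp h1).1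
    have e2 := congrArg Fin.val (Prod.ext_iff.mp h2).1
    simp [Fin.ext_iff] at e1 e2 ⊢
    omega

/-- components of a configuration on `n+2` columns -/
def Bof (S : Finset (Sym2 (Fin 3 × Fin (n + 2)))) : Finset (Fin 3) :=
  Finset.univ.filter (fun i => hEdge n i ∈ S)

def Vof (S : Finset (Sym2 (Fin 3 × Fin (n + 2)))) : Finset (Fin 2) :=
  Finset.univ.filter (fun k => vEdge n k ∈ S)

noncomputable def Rof (S : Finset (Sym2 (Fin 3 × Fin (n + 2)))) : Finset (Sym2 (Fin 3 × Fin (n + 1))) :=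
  S.preimage (semb n) ((semb_inj n).injOn)

def glue (B : Finset (Fin 3)) (V : Finset (Fin 2)) (R : Finset (Sym2 (Fin 3 × Fin (n + 1)))) :
    Finset (Sym2 (Fin 3 × Fin (n + 2))) :=
  R.image (semb n) ∪ B.image (hEdge n) ∪ V.image (vEdge n)

lemma tri {e : Sym2 (Fin 3 × Fin (n + 2))} (he : e ∈ (gridGraph 3 (n + 2)).edgeFinset) :
    (∃ e', e = semb n e') ∨ (∃ i, e = hEdge n i) ∨ (∃ k, e = vEdge n k) := by
  induction e using Sym2.ind with
  | _ a b =>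
    rw [SimpleGraph.mem_edgeFinset, SimpleGraph.mem_edgeSet] at he
    have hadj : gridAdj 3 (n + 2) a b := he
    obtain ⟨i, j⟩ := a
    obtain ⟨i', j'⟩ := b
    rcases hadj with ⟨hrow, hcol⟩ | ⟨hcol, hrow⟩
    · -- horizontal edge, i = i'
      simp only at hrow hcol
      subst hrow
      by_cases hj : (j : ℕ) ≤ n ∧ (j' : ℕ) ≤ n
      · left
        refine ⟨s((i, ⟨j, by omega⟩), (i, ⟨j', by omega⟩)), ?_⟩
        simp [semb, Sym2.map_pair_eq, emb, Fin.ext_iff]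
      · right; left
        refine ⟨i, ?_⟩
        rw [hEdge]
        push_neg at hj
        rcases hcol with h | h
        · have hj' : (j' : ℕ) = n + 1 := by omega
          have hjn : (j : ℕ) = n := by omega
          rw [Sym2.eq_iff]
          left
          constructor <;> · simp [Prod.ext_iff, Fin.ext_iff, colN, colN1]; omega
        · have hj'' : (j : ℕ) = n + 1 := by omega
          have hjn : (j' : ℕ) = n := by omega
          rw [Sym2.eq_iff]
          right
          constructor <;> · simp [Prod.ext_iff, Fin.ext_iff, colN, colN1]; omega
    · -- vertical edge, j = j'
      simp only at hrow hcol
      subst hcol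
      by_cases hj : (j : ℕ) ≤ n
      · left
        refine ⟨s((i, ⟨j, by omega⟩), (i', ⟨j, by omega⟩)), ?_⟩
        simp [semb, Sym2.map_pair_eq, emb, Fin.ext_iff]
      · right; right
        have hj1 : (j : ℕ) = n + 1 := by omega
        rcases hrow with h | h
        · refine ⟨⟨(i : ℕ), by omega⟩, ?_⟩
          rw [vEdge, Sym2.eq_iff]
          left
          constructor <;> · simp [Prod.ext_iff, Fin.ext_iff, colN1]; omega
        · refine ⟨⟨(i' : ℕ), by omega⟩, ?_⟩
          rw [vEdge, Sym2.eq_iff]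
          right
          constructor <;> · simp [Prod.ext_iff, Fin.ext_iff, colN1]; omega

lemma disj_RH (B : Finset (Fin 3)) (R : Finset (Sym2 (Fin 3 × Fin (n + 1)))) :
    Disjoint (R.image (semb n)) (B.image (hEdge n)) := by
  rw [Finset.disjoint_left]
  rintro e he1 he2
  rcases Finset.mem_image.mp he1 with ⟨e', _, rfl⟩
  rcases Finset.mem_image.mp he2 with ⟨i, _, h⟩
  exact hEdge_ne_semb n i e' h

lemma disj_RV (V : Finset (Fin 2)) (R : Finset (Sym2 (Fin 3 × Fin (n + 1)))) :
    Disjoint (R.image (semb n)) (V.image (vEdge n)) := by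
  rw [Finset.disjoint_left]
  rintro e he1 he2
  rcases Finset.mem_image.mp he1 with ⟨e', _, rfl⟩
  rcases Finset.mem_image.mp he2 with ⟨k, _, h⟩
  exact vEdge_ne_semb n k e' h

lemma disj_HV (B : Finset (Fin 3)) (V : Finset (Fin 2)) :
    Disjoint (B.image (hEdge n)) (V.image (vEdge n)) := by
  rw [Finset.disjoint_left]
  rintro e he1 he2
  rcases Finset.mem_image.mp he1 with ⟨i, _, rfl⟩
  rcases Finset.mem_image.mp he2 with ⟨k, _, h⟩
  exact hEdge_ne_vEdge n i k h.symm

lemma glue_filter_card (B : Finset (Fin 3)) (V : Finset (Fin 2))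
    (R : Finset (Sym2 (Fin 3 × Fin (n + 1)))) (p : Sym2 (Fin 3 × Fin (n + 2)) → Prop)
    [DecidablePred p] :
    ((glue n B V R).filter p).card =
      ((R.image (semb n)).filter p).card + ((B.image (hEdge n)).filter p).card
        + ((V.image (vEdge n)).filter p).card := by
  have d1 : Disjoint ((R.image (semb n)).filter p) ((B.image (hEdge n)).filter p) :=
    Finset.disjoint_filter_filter (disj_RH n B R)
  have d2 : Disjoint (((R.image (semb n)) ∪ (B.image (hEdge n))).filter p)
      ((V.image (vEdge n)).filter p) := by
    refine Finset.disjoint_filter_filter ?_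
    rw [Finset.disjoint_union_left]
    exact ⟨disj_RV n V R, disj_HV n B V⟩
  rw [glue, Finset.filter_union, Finset.card_union_of_disjoint d2, Finset.filter_union,
    Finset.card_union_of_disjoint d1]

lemma glue_card_inner (B : Finset (Fin 3)) (V : Finset (Fin 2))
    (R : Finset (Sym2 (Fin 3 × Fin (n + 1)))) (w : Fin 3 × Fin (n + 1)) :
    ((glue n B V R).filter (fun e => emb n w ∈ e)).card
      = (R.filter (fun e => w ∈ e)).card + (if (w.2 : ℕ) = n ∧ w.1 ∈ B then 1 else 0) := by
  rw [glue_filter_card]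
  have h1 : ((R.image (semb n)).filter (fun e => emb n w ∈ e)).card
      = (R.filter (fun e => w ∈ e)).card := by
    rw [Finset.filter_image, Finset.card_image_of_injective _ (semb_inj n)]
    congr 1
    apply Finset.filter_congr
    intro e _
    simp only [mem_semb_iff]
  have h3 : ((V.image (vEdge n)).filter (fun e => emb n w ∈ e)).card = 0 := by
    rw [Finset.card_eq_zero, Finset.filter_eq_empty_iff]
    intro e he
    rcases Finset.mem_image.mp he with ⟨k, _, rfl⟩
    rw [mem_vEdge_iff]
    rintro (h | h) <;>
    · have := congrArg (fun x => ((x.2 : Fin (n + 2)) : ℕ)) h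
      simp [emb, colN1] at this
      omega
  have h2 : ((B.image (hEdge n)).filter (fun e => emb n w ∈ e)).card
      = (if (w.2 : ℕ) = n ∧ w.1 ∈ B then 1 else 0) := by
    rw [Finset.filter_image, Finset.card_image_of_injective _ (hEdge_injective n)]
    by_cases hw : (w.2 : ℕ) = n
    · have hcg : ∀ i ∈ B, (emb n w ∈ hEdge n i) ↔ (i = w.1) := by
        intro i _
        rw [mem_hEdge_iff]
        constructor
        · rintro (h | h)
          · exact ((Prod.ext_iff.mp h).1).symm
          · have := congrArg (fun x => ((x.2 : Fin (n + 2)) : ℕ)) h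
            simp [emb, colN1] at this
            omega
        · rintro rfl
          left
          have : (w.2).castSucc = colN n := by
            rw [Fin.ext_iff]
            simpa [colN] using hw
          simp [emb, this]
      rw [Finset.filter_congr hcg, Finset.filter_eq']
      by_cases hb : w.1 ∈ B <;> simp [hb, hw]
    · rw [if_neg (fun h => hw h.1), Finset.card_eq_zero, Finset.filter_eq_empty_iff]
      intro i _
      rw [mem_hEdge_iff]
      rintro (h | h) <;>
      · have := congrArg (fun x => ((x.2 : Fin (n + 2)) : ℕ)) h
        simp [emb, colN, colN1] at this
        omega
  omega

lemma glue_card_last (B : Finset (Fin 3)) (V : Finset (Fin 2))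
    (R : Finset (Sym2 (Fin 3 × Fin (n + 1)))) (i : Fin 3) :
    ((glue n B V R).filter (fun e => ((i, colN1 n) : Fin 3 × Fin (n + 2)) ∈ e)).card
      = (if i ∈ B then 1 else 0) + vCount V i := by
  rw [glue_filter_card]
  have h1 : ((R.image (semb n)).filter
      (fun e => ((i, colN1 n) : Fin 3 × Fin (n + 2)) ∈ e)).card = 0 := by
    rw [Finset.card_eq_zero, Finset.filter_eq_empty_iff]
    intro e he
    rcases Finset.mem_image.mp he with ⟨e', _, rfl⟩
    intro h
    have := semb_col_le n h
    simp [colN1] at this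
  have h2 : ((B.image (hEdge n)).filter
      (fun e => ((i, colN1 n) : Fin 3 × Fin (n + 2)) ∈ e)).card
      = (if i ∈ B then 1 else 0) := by
    rw [Finset.filter_image, Finset.card_image_of_injective _ (hEdge_injective n)]
    have hcg : ∀ j ∈ B, (((i, colN1 n) : Fin 3 × Fin (n + 2)) ∈ hEdge n j) ↔ (j = i) := by
      intro j _
      rw [mem_hEdge_iff]
      constructor
      · rintro (h | h)
        · have := congrArg (fun x => ((x.2 : Fin (n + 2)) : ℕ)) h
          simp [colN, colN1] at this
        · exact ((Prod.ext_iff.mp h).1).symm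
      · rintro rfl
        right
        rfl
    rw [Finset.filter_congr hcg, Finset.filter_eq']
    by_cases hb : i ∈ B <;> simp [hb]
  have h3 : ((V.image (vEdge n)).filter
      (fun e => ((i, colN1 n) : Fin 3 × Fin (n + 2)) ∈ e)).card = vCount V i := by
    rw [Finset.filter_image, Finset.card_image_of_injective _ (vEdge_injective n)]
    rw [vCount]
    congr 1
    apply Finset.filter_congr
    intro k _
    rw [mem_vEdge_iff]
    simp only [Prod.ext_iff]
    constructor
    · rintro (⟨h1', _⟩ | ⟨h1', _⟩)
      · exact Or.inl h1'
      · exact Or.inr h1'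
    · rintro (h | h)
      · exact Or.inl ⟨h, trivial⟩
      · exact Or.inr ⟨h, trivial⟩
  omega

lemma glue_mem (A B : Finset (Fin 3)) (V : Finset (Fin 2))
    (R : Finset (Sym2 (Fin 3 × Fin (n + 1)))) (hok : okV B A V)
    (hR : R ∈ gridConf (n + 1) B) : glue n B V R ∈ gridConf (n + 2) A := by
  rw [gridConf, Finset.mem_filter, Finset.mem_powerset] at hR ⊢
  obtain ⟨hRsub, hRdeg⟩ := hR
  constructor
  · intro e he
    rcases Finset.mem_union.mp he with he | he
    · rcases Finset.mem_union.mp he with he | he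
      · rcases Finset.mem_image.mp he with ⟨e', he', rfl⟩
        exact (semb_edge n e').mpr (hRsub he')
      · rcases Finset.mem_image.mp he with ⟨i, _, rfl⟩
        exact hEdge_edge n i
    · rcases Finset.mem_image.mp he with ⟨k, _, rfl⟩
      exact vEdge_edge n k
  · rintro ⟨i, j⟩
    by_cases hj : (j : ℕ) ≤ n
    · set w : Fin 3 × Fin (n + 1) := (i, ⟨(j : ℕ), by omega⟩) with hw
      have hv : ((i, j) : Fin 3 × Fin (n + 2)) = emb n w := by
        simp [emb, hw, Fin.ext_iff]
      rw [bdeg, hv, glue_card_inner]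
      have hb : ¬(((emb n w).2 : ℕ) + 1 = n + 2 ∧ (emb n w).1 ∈ A) := by
        simp only [emb, Fin.coe_castSucc]
        rintro ⟨h1, _⟩
        have : (w.2 : ℕ) < n + 1 := w.2.isLt
        omega
      rw [if_neg hb, add_zero]
      have hd := hRdeg w
      rw [bdeg] at hd
      have hiff : ((w.2 : ℕ) + 1 = n + 1) ↔ ((w.2 : ℕ) = n) := by omega
      simp only [hiff] at hd
      exact hd
    · have hj1 : (j : ℕ) = n + 1 := by omega
      have hv : ((i, j) : Fin 3 × Fin (n + 2)) = (i, colN1 n) := by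
        simp [colN1, Fin.ext_iff, hj1]
      rw [bdeg, hv, glue_card_last]
      have hok' := hok i
      by_cases hA : i ∈ A <;> by_cases hB : i ∈ B <;>
        simp only [hA, hB, if_true, if_false, colN1, and_true, and_false] at hok' ⊢ <;>
        omega

lemma glue_split (A : Finset (Fin 3)) (S : Finset (Sym2 (Fin 3 × Fin (n + 2))))
    (hS : S ∈ gridConf (n + 2) A) : glue n (Bof n S) (Vof n S) (Rof n S) = S := by
  rw [gridConf, Finset.mem_filter, Finset.mem_powerset] at hS
  obtain ⟨hsub, -⟩ := hS
  ext e
  simp only [glue, Finset.mem_union, Finset.mem_image, Bof, Vof, Rof, Finset.mem_preimage,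
    Finset.mem_filter, Finset.mem_univ, true_and]
  constructor
  · rintro ((⟨e', he', rfl⟩ | ⟨i, hi, rfl⟩) | ⟨k, hk, rfl⟩)
    · exact he'
    · exact hi
    · exact hk
  · intro he
    rcases tri n (hsub he) with ⟨e', rfl⟩ | ⟨i, rfl⟩ | ⟨k, rfl⟩
    · exact Or.inl (Or.inl ⟨e', he, rfl⟩)
    · exact Or.inl (Or.inr ⟨i, he, rfl⟩)
    · exact Or.inr ⟨k, he, rfl⟩

lemma Rof_mem (A : Finset (Fin 3)) (S : Finset (Sym2 (Fin 3 × Fin (n + 2))))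
    (hS : S ∈ gridConf (n + 2) A) : Rof n S ∈ gridConf (n + 1) (Bof n S) := by
  have hgl := glue_split n A S hS
  rw [gridConf, Finset.mem_filter, Finset.mem_powerset] at hS ⊢
  obtain ⟨hsub, hdeg⟩ := hS
  constructor
  · intro e' he'
    have : semb n e' ∈ S := Finset.mem_preimage.mp he'
    exact (semb_edge n e').mp (hsub this)
  · intro w
    have hd := hdeg (emb n w)
    rw [bdeg, ← hgl, glue_card_inner] at hd
    have hb : ¬(((emb n w).2 : ℕ) + 1 = n + 2 ∧ (emb n w).1 ∈ A) := by
      simp only [emb, Fin.coe_castSucc]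
      rintro ⟨h1, _⟩
      have : (w.2 : ℕ) < n + 1 := w.2.isLt
      omega
    rw [if_neg hb, add_zero] at hd
    rw [bdeg]
    have hiff : ((w.2 : ℕ) + 1 = n + 1) ↔ ((w.2 : ℕ) = n) := by omega
    simp only [hiff]
    exact hd

lemma okV_of_mem (A : Finset (Fin 3)) (S : Finset (Sym2 (Fin 3 × Fin (n + 2))))
    (hS : S ∈ gridConf (n + 2) A) : okV (Bof n S) A (Vof n S) := by
  have hgl := glue_split n A S hS
  rw [gridConf, Finset.mem_filter, Finset.mem_powerset] at hS
  obtain ⟨hsub, hdeg⟩ := hS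
  intro i
  have hd := hdeg (i, colN1 n)
  rw [bdeg, ← hgl, glue_card_last] at hd
  by_cases hA : i ∈ A <;> by_cases hB : i ∈ Bof n S <;>
    simp only [hA, hB, if_true, if_false, colN1, and_true, and_false] at hd ⊢ <;>
    omega

lemma Bof_glue (B : Finset (Fin 3)) (V : Finset (Fin 2))
    (R : Finset (Sym2 (Fin 3 × Fin (n + 1)))) : Bof n (glue n B V R) = B := by
  ext i
  simp only [Bof, Finset.mem_filter, Finset.mem_univ, true_and, glue, Finset.mem_union,
    Finset.mem_image]
  constructor
  · rintro ((⟨e', _, h⟩ | ⟨j, hj, h⟩) | ⟨k, _, h⟩)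
    · exact absurd h.symm (hEdge_ne_semb n i e')
    · rwa [← hEdge_injective n h]
    · exact absurd h.symm (hEdge_ne_vEdge n i k)
  · intro hi
    exact Or.inl (Or.inr ⟨i, hi, rfl⟩)

lemma Vof_glue (B : Finset (Fin 3)) (V : Finset (Fin 2))
    (R : Finset (Sym2 (Fin 3 × Fin (n + 1)))) : Vof n (glue n B V R) = V := by
  ext k
  simp only [Vof, Finset.mem_filter, Finset.mem_univ, true_and, glue, Finset.mem_union,
    Finset.mem_image]
  constructor
  · rintro ((⟨e', _, h⟩ | ⟨j, _, h⟩) | ⟨l, hl, h⟩)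
    · exact absurd h.symm (vEdge_ne_semb n k e')
    · exact absurd h (hEdge_ne_vEdge n j k)
    · rwa [← vEdge_injective n h]
  · intro hk
    exact Or.inr ⟨k, hk, rfl⟩

lemma Rof_glue (B : Finset (Fin 3)) (V : Finset (Fin 2))
    (R : Finset (Sym2 (Fin 3 × Fin (n + 1)))) : Rof n (glue n B V R) = R := by
  ext e'
  simp only [Rof, Finset.mem_preimage, glue, Finset.mem_union, Finset.mem_image]
  constructor
  · rintro ((⟨e'', he'', h⟩ | ⟨i, _, h⟩) | ⟨k, _, h⟩)
    · rwa [← semb_inj n h]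
    · exact absurd h (hEdge_ne_semb n i e')
    · exact absurd h (vEdge_ne_semb n k e')
  · intro h
    exact Or.inl (Or.inl ⟨e', h, rfl⟩)

end Peel

lemma peel (n : ℕ) (A : Finset (Fin 3)) :
    (gridConf (n + 2) A).card = ∑ B : Finset (Fin 3), nOk B A * (gridConf (n + 1) B).card := by
  have key : (gridConf (n + 2) A).card
      = (Finset.univ.sigma (fun B : Finset (Fin 3) =>
          (Finset.univ.filter (okV B A)) ×ˢ gridConf (n + 1) B)).card := by
    apply Finset.card_nbij' (i := fun S => ⟨Bof n S, (Vof n S, Rof n S)⟩)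
      (j := fun p => glue n p.1 p.2.1 p.2.2)
    · intro S hS
      exact Finset.mem_sigma.mpr ⟨Finset.mem_univ _, Finset.mem_product.mpr
        ⟨Finset.mem_filter.mpr ⟨Finset.mem_univ _, okV_of_mem n A S hS⟩, Rof_mem n A S hS⟩⟩
    · rintro ⟨B, V, R⟩ hp
      rw [Finset.mem_coe, Finset.mem_sigma] at hp
      have hp2 := Finset.mem_product.mp hp.2
      exact glue_mem n A B V R (Finset.mem_filter.mp hp2.1).2 hp2.2
    · intro S hS
      exact glue_split n A S hS
    · rintro ⟨B, V, R⟩ hp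
      simp only [Bof_glue, Vof_glue, Rof_glue]
  rw [key, Finset.card_sigma]
  refine Finset.sum_congr rfl (fun B _ => ?_)
  rw [Finset.card_product]
  rfl


lemma nOk_0_0 : nOk (∅ : Finset (Fin 3)) (∅ : Finset (Fin 3)) = 1 := by decide
lemma nOk_0_1 : nOk (∅ : Finset (Fin 3)) ({0} : Finset (Fin 3)) = 0 := by decide
lemma nOk_0_2 : nOk (∅ : Finset (Fin 3)) ({1} : Finset (Fin 3)) = 0 := by decide
lemma nOk_0_3 : nOk (∅ : Finset (Fin 3)) ({2} : Finset (Fin 3)) = 0 := by decide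
lemma nOk_0_4 : nOk (∅ : Finset (Fin 3)) ({0,1} : Finset (Fin 3)) = 1 := by decide
lemma nOk_0_5 : nOk (∅ : Finset (Fin 3)) ({0,2} : Finset (Fin 3)) = 1 := by decide
lemma nOk_0_6 : nOk (∅ : Finset (Fin 3)) ({1,2} : Finset (Fin 3)) = 1 := by decide
lemma nOk_0_7 : nOk (∅ : Finset (Fin 3)) ({0,1,2} : Finset (Fin 3)) = 0 := by decide
lemma nOk_1_0 : nOk ({0} : Finset (Fin 3)) (∅ : Finset (Fin 3)) = 0 := by decide
lemma nOk_1_1 : nOk ({0} : Finset (Fin 3)) ({0} : Finset (Fin 3)) = 1 := by decide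
lemma nOk_1_2 : nOk ({0} : Finset (Fin 3)) ({1} : Finset (Fin 3)) = 1 := by decide
lemma nOk_1_3 : nOk ({0} : Finset (Fin 3)) ({2} : Finset (Fin 3)) = 1 := by decide
lemma nOk_1_4 : nOk ({0} : Finset (Fin 3)) ({0,1} : Finset (Fin 3)) = 0 := by decide
lemma nOk_1_5 : nOk ({0} : Finset (Fin 3)) ({0,2} : Finset (Fin 3)) = 0 := by decide
lemma nOk_1_6 : nOk ({0} : Finset (Fin 3)) ({1,2} : Finset (Fin 3)) = 0 := by decide
lemma nOk_1_7 : nOk ({0} : Finset (Fin 3)) ({0,1,2} : Finset (Fin 3)) = 1 := by decide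
lemma nOk_2_0 : nOk ({1} : Finset (Fin 3)) (∅ : Finset (Fin 3)) = 0 := by decide
lemma nOk_2_1 : nOk ({1} : Finset (Fin 3)) ({0} : Finset (Fin 3)) = 1 := by decide
lemma nOk_2_2 : nOk ({1} : Finset (Fin 3)) ({1} : Finset (Fin 3)) = 1 := by decide
lemma nOk_2_3 : nOk ({1} : Finset (Fin 3)) ({2} : Finset (Fin 3)) = 1 := by decide
lemma nOk_2_4 : nOk ({1} : Finset (Fin 3)) ({0,1} : Finset (Fin 3)) = 0 := by decide
lemma nOk_2_5 : nOk ({1} : Finset (Fin 3)) ({0,2} : Finset (Fin 3)) = 0 := by decide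
lemma nOk_2_6 : nOk ({1} : Finset (Fin 3)) ({1,2} : Finset (Fin 3)) = 0 := by decide
lemma nOk_2_7 : nOk ({1} : Finset (Fin 3)) ({0,1,2} : Finset (Fin 3)) = 0 := by decide
lemma nOk_3_0 : nOk ({2} : Finset (Fin 3)) (∅ : Finset (Fin 3)) = 0 := by decide
lemma nOk_3_1 : nOk ({2} : Finset (Fin 3)) ({0} : Finset (Fin 3)) = 1 := by decide
lemma nOk_3_2 : nOk ({2} : Finset (Fin 3)) ({1} : Finset (Fin 3)) = 1 := by decide
lemma nOk_3_3 : nOk ({2} : Finset (Fin 3)) ({2} : Finset (Fin 3)) = 1 := by decide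
lemma nOk_3_4 : nOk ({2} : Finset (Fin 3)) ({0,1} : Finset (Fin 3)) = 0 := by decide
lemma nOk_3_5 : nOk ({2} : Finset (Fin 3)) ({0,2} : Finset (Fin 3)) = 0 := by decide
lemma nOk_3_6 : nOk ({2} : Finset (Fin 3)) ({1,2} : Finset (Fin 3)) = 0 := by decide
lemma nOk_3_7 : nOk ({2} : Finset (Fin 3)) ({0,1,2} : Finset (Fin 3)) = 1 := by decide
lemma nOk_4_0 : nOk ({0,1} : Finset (Fin 3)) (∅ : Finset (Fin 3)) = 1 := by decide
lemma nOk_4_1 : nOk ({0,1} : Finset (Fin 3)) ({0} : Finset (Fin 3)) = 0 := by decide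
lemma nOk_4_2 : nOk ({0,1} : Finset (Fin 3)) ({1} : Finset (Fin 3)) = 0 := by decide
lemma nOk_4_3 : nOk ({0,1} : Finset (Fin 3)) ({2} : Finset (Fin 3)) = 0 := by decide
lemma nOk_4_4 : nOk ({0,1} : Finset (Fin 3)) ({0,1} : Finset (Fin 3)) = 1 := by decide
lemma nOk_4_5 : nOk ({0,1} : Finset (Fin 3)) ({0,2} : Finset (Fin 3)) = 1 := by decide
lemma nOk_4_6 : nOk ({0,1} : Finset (Fin 3)) ({1,2} : Finset (Fin 3)) = 0 := by decide
lemma nOk_4_7 : nOk ({0,1} : Finset (Fin 3)) ({0,1,2} : Finset (Fin 3)) = 0 := by decide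
lemma nOk_5_0 : nOk ({0,2} : Finset (Fin 3)) (∅ : Finset (Fin 3)) = 1 := by decide
lemma nOk_5_1 : nOk ({0,2} : Finset (Fin 3)) ({0} : Finset (Fin 3)) = 0 := by decide
lemma nOk_5_2 : nOk ({0,2} : Finset (Fin 3)) ({1} : Finset (Fin 3)) = 0 := by decide
lemma nOk_5_3 : nOk ({0,2} : Finset (Fin 3)) ({2} : Finset (Fin 3)) = 0 := by decide
lemma nOk_5_4 : nOk ({0,2} : Finset (Fin 3)) ({0,1} : Finset (Fin 3)) = 1 := by decide
lemma nOk_5_5 : nOk ({0,2} : Finset (Fin 3)) ({0,2} : Finset (Fin 3)) = 1 := by decide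
lemma nOk_5_6 : nOk ({0,2} : Finset (Fin 3)) ({1,2} : Finset (Fin 3)) = 1 := by decide
lemma nOk_5_7 : nOk ({0,2} : Finset (Fin 3)) ({0,1,2} : Finset (Fin 3)) = 0 := by decide
lemma nOk_6_0 : nOk ({1,2} : Finset (Fin 3)) (∅ : Finset (Fin 3)) = 1 := by decide
lemma nOk_6_1 : nOk ({1,2} : Finset (Fin 3)) ({0} : Finset (Fin 3)) = 0 := by decide
lemma nOk_6_2 : nOk ({1,2} : Finset (Fin 3)) ({1} : Finset (Fin 3)) = 0 := by decide
lemma nOk_6_3 : nOk ({1,2} : Finset (Fin 3)) ({2} : Finset (Fin 3)) = 0 := by decide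
lemma nOk_6_4 : nOk ({1,2} : Finset (Fin 3)) ({0,1} : Finset (Fin 3)) = 0 := by decide
lemma nOk_6_5 : nOk ({1,2} : Finset (Fin 3)) ({0,2} : Finset (Fin 3)) = 1 := by decide
lemma nOk_6_6 : nOk ({1,2} : Finset (Fin 3)) ({1,2} : Finset (Fin 3)) = 1 := by decide
lemma nOk_6_7 : nOk ({1,2} : Finset (Fin 3)) ({0,1,2} : Finset (Fin 3)) = 0 := by decide
lemma nOk_7_0 : nOk ({0,1,2} : Finset (Fin 3)) (∅ : Finset (Fin 3)) = 0 := by decide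
lemma nOk_7_1 : nOk ({0,1,2} : Finset (Fin 3)) ({0} : Finset (Fin 3)) = 1 := by decide
lemma nOk_7_2 : nOk ({0,1,2} : Finset (Fin 3)) ({1} : Finset (Fin 3)) = 0 := by decide
lemma nOk_7_3 : nOk ({0,1,2} : Finset (Fin 3)) ({2} : Finset (Fin 3)) = 1 := by decide
lemma nOk_7_4 : nOk ({0,1,2} : Finset (Fin 3)) ({0,1} : Finset (Fin 3)) = 0 := by decide
lemma nOk_7_5 : nOk ({0,1,2} : Finset (Fin 3)) ({0,2} : Finset (Fin 3)) = 0 := by decide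
lemma nOk_7_6 : nOk ({0,1,2} : Finset (Fin 3)) ({1,2} : Finset (Fin 3)) = 0 := by decide
lemma nOk_7_7 : nOk ({0,1,2} : Finset (Fin 3)) ({0,1,2} : Finset (Fin 3)) = 1 := by decide

lemma sum_finsetFin3 (f : Finset (Fin 3) → ℕ) :
    ∑ B : Finset (Fin 3), f B =
      f ∅ + f {0} + f {1} + f {2} + f {0,1} + f {0,2} + f {1,2} + f {0,1,2} := by
  have h : (Finset.univ : Finset (Finset (Fin 3))) =
      {∅, {0}, {1}, {2}, {0,1}, {0,2}, {1,2}, {0,1,2}} := by decide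
  rw [h]
  rw [Finset.sum_insert (by decide), Finset.sum_insert (by decide), Finset.sum_insert (by decide),
    Finset.sum_insert (by decide), Finset.sum_insert (by decide), Finset.sum_insert (by decide),
    Finset.sum_insert (by decide), Finset.sum_singleton]
  omega

def eC (n : ℕ) : ℕ := (gridConf n ∅).card
def gC (n : ℕ) : ℕ := (gridConf n ({0,1} : Finset (Fin 3))).card

lemma inv (m : ℕ) :
    (gridConf (m+1) ({0,2} : Finset (Fin 3))).card = (gridConf (m+1) ∅).card ∧
    (gridConf (m+1) ({1,2} : Finset (Fin 3))).card = (gridConf (m+1) ({0,1} : Finset (Fin 3))).card ∧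
    (gridConf (m+1) ({0} : Finset (Fin 3))).card = 0 ∧
    (gridConf (m+1) ({1} : Finset (Fin 3))).card = 0 ∧
    (gridConf (m+1) ({2} : Finset (Fin 3))).card = 0 ∧
    (gridConf (m+1) ({0,1,2} : Finset (Fin 3))).card = 0 := by
  induction m with
  | zero =>
    refine ⟨?_, ?_, ?_, ?_, ?_, ?_⟩ <;> rw [base1] <;> try rw [base1]
    all_goals decide
  | succ k ih =>
    obtain ⟨h1, h2, h3, h4, h5, h6⟩ := ih
    have hc : k + 1 + 1 = k + 2 := by omega
    refine ⟨?_, ?_, ?_, ?_, ?_, ?_⟩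
    · rw [hc, peel k, peel k, sum_finsetFin3, sum_finsetFin3]
      simp only [nOk_0_0, nOk_0_1, nOk_0_2, nOk_0_3, nOk_0_4, nOk_0_5, nOk_0_6, nOk_0_7, nOk_1_0, nOk_1_1, nOk_1_2, nOk_1_3, nOk_1_4, nOk_1_5, nOk_1_6, nOk_1_7, nOk_2_0, nOk_2_1, nOk_2_2, nOk_2_3, nOk_2_4, nOk_2_5, nOk_2_6, nOk_2_7, nOk_3_0, nOk_3_1, nOk_3_2, nOk_3_3, nOk_3_4, nOk_3_5, nOk_3_6, nOk_3_7, nOk_4_0, nOk_4_1, nOk_4_2, nOk_4_3, nOk_4_4, nOk_4_5, nOk_4_6, nOk_4_7, nOk_5_0, nOk_5_1, nOk_5_2, nOk_5_3, nOk_5_4, nOk_5_5, nOk_5_6, nOk_5_7, nOk_6_0, nOk_6_1, nOk_6_2, nOk_6_3, nOk_6_4, nOk_6_5, nOk_6_6, nOk_6_7, nOk_7_0, nOk_7_1, nOk_7_2, nOk_7_3, nOk_7_4, nOk_7_5, nOk_7_6, nOk_7_7]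
      all_goals omega
    · rw [hc, peel k, peel k, sum_finsetFin3, sum_finsetFin3]
      simp only [nOk_0_0, nOk_0_1, nOk_0_2, nOk_0_3, nOk_0_4, nOk_0_5, nOk_0_6, nOk_0_7, nOk_1_0, nOk_1_1, nOk_1_2, nOk_1_3, nOk_1_4, nOk_1_5, nOk_1_6, nOk_1_7, nOk_2_0, nOk_2_1, nOk_2_2, nOk_2_3, nOk_2_4, nOk_2_5, nOk_2_6, nOk_2_7, nOk_3_0, nOk_3_1, nOk_3_2, nOk_3_3, nOk_3_4, nOk_3_5, nOk_3_6, nOk_3_7, nOk_4_0, nOk_4_1, nOk_4_2, nOk_4_3, nOk_4_4, nOk_4_5, nOk_4_6, nOk_4_7, nOk_5_0, nOk_5_1, nOk_5_2, nOk_5_3, nOk_5_4, nOk_5_5, nOk_5_6, nOk_5_7, nOk_6_0, nOk_6_1, nOk_6_2, nOk_6_3, nOk_6_4, nOk_6_5, nOk_6_6, nOk_6_7, nOk_7_0, nOk_7_1, nOk_7_2, nOk_7_3, nOk_7_4, nOk_7_5, nOk_7_6, nOk_7_7]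
      omega
    all_goals
      rw [hc, peel k, sum_finsetFin3]
      simp only [nOk_0_0, nOk_0_1, nOk_0_2, nOk_0_3, nOk_0_4, nOk_0_5, nOk_0_6, nOk_0_7, nOk_1_0, nOk_1_1, nOk_1_2, nOk_1_3, nOk_1_4, nOk_1_5, nOk_1_6, nOk_1_7, nOk_2_0, nOk_2_1, nOk_2_2, nOk_2_3, nOk_2_4, nOk_2_5, nOk_2_6, nOk_2_7, nOk_3_0, nOk_3_1, nOk_3_2, nOk_3_3, nOk_3_4, nOk_3_5, nOk_3_6, nOk_3_7, nOk_4_0, nOk_4_1, nOk_4_2, nOk_4_3, nOk_4_4, nOk_4_5, nOk_4_6, nOk_4_7, nOk_5_0, nOk_5_1, nOk_5_2, nOk_5_3, nOk_5_4, nOk_5_5, nOk_5_6, nOk_5_7, nOk_6_0, nOk_6_1, nOk_6_2, nOk_6_3, nOk_6_4, nOk_6_5, nOk_6_6, nOk_6_7, nOk_7_0, nOk_7_1, nOk_7_2, nOk_7_3, nOk_7_4, nOk_7_5, nOk_7_6, nOk_7_7]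
      omega

lemma rec_e (k : ℕ) : eC (k+2) = 2 * eC (k+1) + 2 * gC (k+1) := by
  obtain ⟨h1, h2, h3, h4, h5, h6⟩ := inv k
  simp only [eC, gC]
  rw [peel k, sum_finsetFin3]
  simp only [nOk_0_0, nOk_0_1, nOk_0_2, nOk_0_3, nOk_0_4, nOk_0_5, nOk_0_6, nOk_0_7, nOk_1_0, nOk_1_1, nOk_1_2, nOk_1_3, nOk_1_4, nOk_1_5, nOk_1_6, nOk_1_7, nOk_2_0, nOk_2_1, nOk_2_2, nOk_2_3, nOk_2_4, nOk_2_5, nOk_2_6, nOk_2_7, nOk_3_0, nOk_3_1, nOk_3_2, nOk_3_3, nOk_3_4, nOk_3_5, nOk_3_6, nOk_3_7, nOk_4_0, nOk_4_1, nOk_4_2, nOk_4_3, nOk_4_4, nOk_4_5, nOk_4_6, nOk_4_7, nOk_5_0, nOk_5_1, nOk_5_2, nOk_5_3, nOk_5_4, nOk_5_5, nOk_5_6, nOk_5_7, nOk_6_0, nOk_6_1, nOk_6_2, nOk_6_3, nOk_6_4, nOk_6_5, nOk_6_6, nOk_6_7, nOk_7_0, nOk_7_1, nOk_7_2, nOk_7_3,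 nOk_7_4, nOk_7_5, nOk_7_6, nOk_7_7]
  omega

lemma rec_g (k : ℕ) : gC (k+2) = 2 * eC (k+1) + gC (k+1) := by
  obtain ⟨h1, h2, h3, h4, h5, h6⟩ := inv k
  simp only [eC, gC]
  rw [peel k, sum_finsetFin3]
  simp only [nOk_0_0, nOk_0_1, nOk_0_2, nOk_0_3, nOk_0_4, nOk_0_5, nOk_0_6, nOk_0_7, nOk_1_0, nOk_1_1, nOk_1_2, nOk_1_3, nOk_1_4, nOk_1_5, nOk_1_6, nOk_1_7, nOk_2_0, nOk_2_1, nOk_2_2, nOk_2_3, nOk_2_4, nOk_2_5, nOk_2_6, nOk_2_7, nOk_3_0, nOk_3_1, nOk_3_2, nOk_3_3, nOk_3_4, nOk_3_5, nOk_3_6, nOk_3_7, nOk_4_0, nOk_4_1, nOk_4_2, nOk_4_3, nOk_4_4, nOk_4_5, nOk_4_6, nOk_4_7, nOk_5_0, nOk_5_1, nOk_5_2, nOk_5_3, nOk_5_4, nOk_5_5, nOk_5_6, nOk_5_7, nOk_6_0, nOk_6_1, nOk_6_2, nOk_6_3, nOk_6_4, nOk_6_5, nOk_6_6, nOk_6_7,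 nOk_7_0, nOk_7_1, nOk_7_2, nOk_7_3, nOk_7_4, nOk_7_5, nOk_7_6, nOk_7_7]
  omega

lemma base_vals : eC 3 = 14 ∧ gC 3 = 11 := by
  have he1 : eC 1 = 1 := by
    rw [eC, base1 ∅]
    decide
  have hg1 : gC 1 = 1 := by
    rw [gC, base1 ({0,1} : Finset (Fin 3))]
    decide
  have he2 := rec_e 0
  have hg2 := rec_g 0
  have he3 := rec_e 1
  have hg3 := rec_g 1
  norm_num at he2 hg2 he3 hg3
  omega

lemma count_eq (n : ℕ) : msapCount 3 n + 1 = eC n := msap_card n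

attribute [irreducible] eC gC

lemma bounds (m : ℕ) :
    14 * ((7:ℝ)/2)^m ≤ (eC (m+3) : ℝ) ∧ (eC (m+3) : ℝ) ≤ 14 * ((11:ℝ)/3)^m ∧
    3 * eC (m+3) ≤ 4 * gC (m+3) ∧ 6 * gC (m+3) ≤ 5 * eC (m+3) := by
  induction m with
  | zero =>
    obtain ⟨he, hg⟩ := base_vals
    rw [he, hg]
    norm_num
  | succ k ih =>
    obtain ⟨ih1, ih2, ih3, ih4⟩ := ih
    have hi1 : k + 2 + 2 = k + 4 := by omega
    have hi2 : k + 2 + 1 = k + 3 := by omega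
    have hre := rec_e (k+2)
    have hrg := rec_g (k+2)
    rw [hi1, hi2] at hre hrg
    have h3R : 3 * (eC (k+3) : ℝ) ≤ 4 * (gC (k+3) : ℝ) := by exact_mod_cast ih3
    have h4R : 6 * (gC (k+3) : ℝ) ≤ 5 * (eC (k+3) : ℝ) := by exact_mod_cast ih4
    have heR : ((eC (k+1+3) : ℝ)) = 2 * (eC (k+3) : ℝ) + 2 * (gC (k+3) : ℝ) := by
      have : k+1+3 = k+4 := by omega
      rw [this, hre]; push_cast; ring
    refine ⟨?_, ?_, ?_, ?_⟩
    · rw [heR, pow_succ]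
      linarith [ih1, h3R]
    · rw [heR, pow_succ]
      linarith [ih2, h4R]
    · have : k+1+3 = k+4 := by omega
      rw [this, hre, hrg]; omega
    · have : k+1+3 = k+4 := by omega
      rw [this, hre, hrg]; omega

end MSAP

/-- Bounds on the number of multiple self-avoiding polygons in the 3×n grid. -/
theorem msap_three_by_n (n : ℕ) (hn : 3 ≤ n) :
    14 * ((7 : ℝ) / 2) ^ (n - 3) - 1 ≤ (msapCount 3 n : ℝ) ∧
    (msapCount 3 n : ℝ) ≤ 14 * ((11 : ℝ) / 3) ^ (n - 3) - 1 := by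
  obtain ⟨m, rfl⟩ : ∃ m, n = m + 3 := ⟨n - 3, by omega⟩
  obtain ⟨h1, h2, h3, h4⟩ := MSAP.bounds m
  have hsub : m + 3 - 3 = m := by omega
  rw [hsub]
  have hc : ((msapCount 3 (m+3) : ℝ)) + 1 = (MSAP.eC (m+3) : ℝ) := by
    exact_mod_cast congrArg (Nat.cast : ℕ → ℝ) (MSAP.count_eq (m+3))
  constructor <;> linarith
end

section
/- For m, n ≥ 4 and any position (i,j) with predecessor a(i,j) in the antidiagonal order, the number of quasimosaics satisfies |Q_{a(i,j)}| ≤ |Q_{i,j}| ≤ 2·|Q_{a(i,j)}|; that is, every a(i,j)-quasimosaic extends to at least one and at most two (i,j)-quasimosaics. -/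
/-- The seven polygon mosaic tiles. -/
inductive Tile | T1 | T2 | T3 | T4 | T5 | T6 | T7
  deriving DecidableEq

instance instFintypeTile : Fintype Tile :=
  ⟨{.T1, .T2, .T3, .T4, .T5, .T6, .T7}, fun x => by cases x <;> simp⟩

/-- Connection point on the left edge. -/
def cpL : Tile → Bool
  | .T2 => true | .T5 => true | .T6 => true | _ => false

/-- Connection point on the top edge. -/
def cpT : Tile → Bool
  | .T4 => true | .T5 => true | .T7 => true | _ => false

/-- Connection point on the right edge. -/
def cpR : Tile → Bool
  | .T2 => true | .T3 => true | .T7 => true | _ => false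

/-- Connection point on the bottom edge. -/
def cpB : Tile → Bool
  | .T3 => true | .T4 => true | .T6 => true | _ => false

/-- Connection-point data (left, top, right, bottom) of a tile. -/
def cp (X : Tile) : Bool × Bool × Bool × Bool := (cpL X, cpT X, cpR X, cpB X)

/-- The antidiagonal order on positions: (a₁,a₂) comes no later than (b₁,b₂). -/
def ole (a b : ℕ × ℕ) : Prop :=
  a.1 + a.2 < b.1 + b.2 ∨ (a.1 + a.2 = b.1 + b.2 ∧ a.1 ≤ b.1)

/-- The strict antidiagonal order on positions. -/
def olt (a b : ℕ × ℕ) : Prop :=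
  a.1 + a.2 < b.1 + b.2 ∨ (a.1 + a.2 = b.1 + b.2 ∧ a.1 < b.1)

instance (a b : ℕ × ℕ) : Decidable (ole a b) := by unfold ole; infer_instance
instance (a b : ℕ × ℕ) : Decidable (olt a b) := by unfold olt; infer_instance

/-- The set of (r,c)-quasimosaics (0-based): assignments of tiles to all positions
up to and including (r,c) in the antidiagonal order which are suitably connected
and have no connection point on the boundary of the m×n array. -/
def Quasi (m n r c : ℕ) :
    Finset ({p : Fin m × Fin n // ole ((p.1 : ℕ), (p.2 : ℕ)) (r, c)} → Tile) :=
  Finset.univ.filter (fun M =>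
    (∀ p q, (p.1.1 : ℕ) = (q.1.1 : ℕ) ∧ (p.1.2 : ℕ) + 1 = (q.1.2 : ℕ) →
      cpR (M p) = cpL (M q)) ∧
    (∀ p q, (p.1.2 : ℕ) = (q.1.2 : ℕ) ∧ (p.1.1 : ℕ) + 1 = (q.1.1 : ℕ) →
      cpB (M p) = cpT (M q)) ∧
    (∀ p, ((p.1.2 : ℕ) = 0 → cpL (M p) = false) ∧
      ((p.1.2 : ℕ) = n - 1 → cpR (M p) = false) ∧
      ((p.1.1 : ℕ) = 0 → cpT (M p) = false) ∧
      ((p.1.1 : ℕ) = m - 1 → cpB (M p) = false)))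

/-! ### Auxiliary material for the proof -/

section Aux
open Finset

def cZ (b : Bool) : ZMod 2 := if b then 1 else 0

lemma tile_even (X : Tile) : cZ (cpL X) + cZ (cpT X) + cZ (cpR X) + cZ (cpB X) = 0 := by
  cases X <;> decide

lemma chain (f g : Tile → Bool) (t : ℕ → Tile) (h0 : f (t 0) = false) :
    ∀ k, (∀ j, j < k → g (t j) = f (t (j + 1))) →
      ∑ j ∈ Finset.range (k + 1), (cZ (f (t j)) + cZ (g (t j))) = cZ (g (t k)) := by
  intro k
  induction k with
  | zero => intro _; simp [h0, cZ]
  | succ k ih =>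
    intro h
    rw [Finset.sum_range_succ, ih (fun j hj => h j (by omega)), h k (by omega)]
    have : ∀ x y : Bool, cZ x + (cZ x + cZ y) = cZ y := by decide
    exact this _ _

lemma parity (m n : ℕ) (hm : 2 ≤ m) (hn : 2 ≤ n) (M : ℕ × ℕ → Tile)
    (hH : ∀ i j, i < m → j + 1 < n → ¬(i = m - 1 ∧ j + 1 = n - 1) →
      cpR (M (i, j)) = cpL (M (i, j + 1)))
    (hV : ∀ i j, i + 1 < m → j < n → ¬(i + 1 = m - 1 ∧ j = n - 1) →
      cpB (M (i, j)) = cpT (M (i + 1, j)))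
    (hL : ∀ i, i < m → cpL (M (i, 0)) = false)
    (hT : ∀ j, j < n → cpT (M (0, j)) = false)
    (hR : ∀ i, i < m - 1 → cpR (M (i, n - 1)) = false)
    (hB : ∀ j, j < n - 1 → cpB (M (m - 1, j)) = false) :
    cpR (M (m - 1, n - 2)) = cpB (M (m - 2, n - 1)) := by
  obtain ⟨mi, rfl⟩ : ∃ mi, m = mi + 2 := ⟨m - 2, by omega⟩
  obtain ⟨nj, rfl⟩ : ∃ nj, n = nj + 2 := ⟨n - 2, by omega⟩
  simp only [show mi + 2 - 1 = mi + 1 from rfl, show mi + 2 - 2 = mi from rfl,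
    show nj + 2 - 1 = nj + 1 from rfl, show nj + 2 - 2 = nj from rfl] at hH hV hR hB ⊢
  have row : ∀ i, i < mi + 1 →
      ∑ j ∈ range (nj + 2), (cZ (cpL (M (i, j))) + cZ (cpR (M (i, j)))) = 0 := by
    intro i hi
    have := chain cpL cpR (fun j => M (i, j)) (hL i (by omega)) (nj + 1)
      (fun j hj => hH i j (by omega) (by omega) (by omega))
    rw [this, hR i hi]; rfl
  have rowlast :
      ∑ j ∈ range (nj + 2), (cZ (cpL (M (mi + 1, j))) + cZ (cpR (M (mi + 1, j)))) =
        cZ (cpR (M (mi + 1, nj))) +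
          (cZ (cpL (M (mi + 1, nj + 1))) + cZ (cpR (M (mi + 1, nj + 1)))) := by
    rw [Finset.sum_range_succ]
    congr 1
    exact chain cpL cpR (fun j => M (mi + 1, j)) (hL _ (by omega)) nj
      (fun j hj => hH (mi + 1) j (by omega) (by omega) (by omega))
  have col : ∀ j, j < nj + 1 →
      ∑ i ∈ range (mi + 2), (cZ (cpT (M (i, j))) + cZ (cpB (M (i, j)))) = 0 := by
    intro j hj
    have := chain cpT cpB (fun i => M (i, j)) (hT j (by omega)) (mi + 1)
      (fun i hi => hV i j (by omega) (by omega) (by omega))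
    rw [this, hB j hj]; rfl
  have collast :
      ∑ i ∈ range (mi + 2), (cZ (cpT (M (i, nj + 1))) + cZ (cpB (M (i, nj + 1)))) =
        cZ (cpB (M (mi, nj + 1))) +
          (cZ (cpT (M (mi + 1, nj + 1))) + cZ (cpB (M (mi + 1, nj + 1)))) := by
    rw [Finset.sum_range_succ]
    congr 1
    exact chain cpT cpB (fun i => M (i, nj + 1)) (hT _ (by omega)) mi
      (fun i hi => hV i (nj + 1) (by omega) (by omega) (by omega))
  have hS0 : ∑ i ∈ range (mi + 2), ∑ j ∈ range (nj + 2),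
      (cZ (cpL (M (i, j))) + cZ (cpT (M (i, j))) + cZ (cpR (M (i, j))) + cZ (cpB (M (i, j))))
        = 0 :=
    Finset.sum_eq_zero (fun i _ => Finset.sum_eq_zero (fun j _ => tile_even _))
  have split : ∑ i ∈ range (mi + 2), ∑ j ∈ range (nj + 2),
      (cZ (cpL (M (i, j))) + cZ (cpT (M (i, j))) + cZ (cpR (M (i, j))) + cZ (cpB (M (i, j)))) =
      (∑ i ∈ range (mi + 2), ∑ j ∈ range (nj + 2),
        (cZ (cpL (M (i, j))) + cZ (cpR (M (i, j))))) +
      (∑ j ∈ range (nj + 2), ∑ i ∈ range (mi + 2),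
        (cZ (cpT (M (i, j))) + cZ (cpB (M (i, j)))))  := by
    rw [Finset.sum_comm (s := range (nj + 2))]
    rw [← Finset.sum_add_distrib]
    refine Finset.sum_congr rfl (fun i _ => ?_)
    rw [← Finset.sum_add_distrib]
    refine Finset.sum_congr rfl (fun j _ => ?_)
    ring
  have rowsum : ∑ i ∈ range (mi + 2), ∑ j ∈ range (nj + 2),
      (cZ (cpL (M (i, j))) + cZ (cpR (M (i, j)))) =
      cZ (cpR (M (mi + 1, nj))) +
        (cZ (cpL (M (mi + 1, nj + 1))) + cZ (cpR (M (mi + 1, nj + 1)))) := by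
    rw [Finset.sum_range_succ, Finset.sum_eq_zero (fun i hi => row i (Finset.mem_range.mp hi)),
      zero_add, rowlast]
  have colsum : ∑ j ∈ range (nj + 2), ∑ i ∈ range (mi + 2),
      (cZ (cpT (M (i, j))) + cZ (cpB (M (i, j)))) =
      cZ (cpB (M (mi, nj + 1))) +
        (cZ (cpT (M (mi + 1, nj + 1))) + cZ (cpB (M (mi + 1, nj + 1)))) := by
    rw [Finset.sum_range_succ, Finset.sum_eq_zero (fun j hj => col j (Finset.mem_range.mp hj)),
      zero_add, collast]
  have key : cZ (cpR (M (mi + 1, nj))) + cZ (cpB (M (mi, nj + 1))) = 0 := by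
    have h0 := hS0
    rw [split, rowsum, colsum] at h0
    have he := tile_even (M (mi + 1, nj + 1))
    have h2 : cZ (cpR (M (mi + 1, nj))) + cZ (cpB (M (mi, nj + 1))) +
        (cZ (cpL (M (mi + 1, nj + 1))) + cZ (cpT (M (mi + 1, nj + 1))) +
         cZ (cpR (M (mi + 1, nj + 1))) + cZ (cpB (M (mi + 1, nj + 1)))) = 0 := by
      rw [← h0]; ring
    rwa [he, add_zero] at h2
  have : ∀ x y : Bool, cZ x + cZ y = 0 → x = y := by decide
  exact this _ _ key

/-- canonical tile for prescribed constraints -/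
def pick (l t rB bB : Bool) : Tile :=
  match l, t, rB, bB with
  | false, false, _, _ => .T1
  | true, true, _, _ => .T5
  | true, false, false, _ => .T2
  | true, false, true, _ => .T6
  | false, true, _, false => .T4
  | false, true, _, true => .T7

lemma pick_spec : ∀ l t rB bB : Bool, (rB = true → bB = true → l = t) →
    cpL (pick l t rB bB) = l ∧ cpT (pick l t rB bB) = t ∧
    (rB = true → cpR (pick l t rB bB) = false) ∧
    (bB = true → cpB (pick l t rB bB) = false) := by decide

lemma tiles_le_two : ∀ l t : Bool,
    (Finset.univ.filter fun X : Tile => cpL X = l ∧ cpT X = t).card ≤ 2 := by decide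

lemma ole_refl (x : ℕ × ℕ) : ole x x := Or.inr ⟨rfl, le_refl _⟩

lemma not_ole {x y : ℕ × ℕ} (h : ¬ ole x y) : olt y x := by
  unfold ole olt at *; omega

lemma ole_olt_trans {x y z : ℕ × ℕ} (h1 : ole x y) (h2 : olt y z) : olt x z := by
  unfold ole olt at *; omega

lemma olt_ole {x y : ℕ × ℕ} (h : olt x y) : ole x y := by
  unfold ole olt at *; omega

lemma ole_ne_olt {x y : ℕ × ℕ} (h : ole x y) (hne : x ≠ y) : olt x y := by
  have : ¬(x.1 = y.1 ∧ x.2 = y.2) := fun hc => hne (Prod.ext hc.1 hc.2)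
  unfold ole olt at *; omega

/-- total-function version of a partial tile assignment -/
def toTotal (m n : ℕ) (a : ℕ × ℕ)
    (N : {p : Fin m × Fin n // ole ((p.1 : ℕ), (p.2 : ℕ)) a} → Tile) : ℕ × ℕ → Tile :=
  fun x => if h : x.1 < m ∧ x.2 < n ∧ ole x a then
    N ⟨(⟨x.1, h.1⟩, ⟨x.2, h.2.1⟩), h.2.2⟩ else Tile.T1

lemma toTotal_eq (m n : ℕ) (a : ℕ × ℕ)
    (N : {p : Fin m × Fin n // ole ((p.1 : ℕ), (p.2 : ℕ)) a} → Tile)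
    (p : {p : Fin m × Fin n // ole ((p.1 : ℕ), (p.2 : ℕ)) a}) :
    toTotal m n a N ((p.1.1 : ℕ), (p.1.2 : ℕ)) = N p := by
  rw [toTotal, dif_pos ⟨p.1.1.isLt, p.1.2.isLt, p.2⟩]

lemma toTotal_pos (m n : ℕ) (a : ℕ × ℕ)
    (N : {p : Fin m × Fin n // ole ((p.1 : ℕ), (p.2 : ℕ)) a} → Tile)
    (x : ℕ × ℕ) (h1 : x.1 < m) (h2 : x.2 < n) (h3 : ole x a) :
    toTotal m n a N x = N ⟨(⟨x.1, h1⟩, ⟨x.2, h2⟩), h3⟩ := by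
  rw [toTotal, dif_pos ⟨h1, h2, h3⟩]

/-- extension of a partial tile assignment by one tile -/
def extF (m n : ℕ) (a b : ℕ × ℕ)
    (N : {p : Fin m × Fin n // ole ((p.1 : ℕ), (p.2 : ℕ)) a} → Tile) (X : Tile) :
    {p : Fin m × Fin n // ole ((p.1 : ℕ), (p.2 : ℕ)) b} → Tile :=
  fun p => if h : ole ((p.1.1 : ℕ), (p.1.2 : ℕ)) a then N ⟨p.1, h⟩ else X

/-- restriction of a partial tile assignment -/
def resF (m n : ℕ) (a b : ℕ × ℕ) (h : ∀ x : ℕ × ℕ, ole x a → ole x b)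
    (M : {p : Fin m × Fin n // ole ((p.1 : ℕ), (p.2 : ℕ)) b} → Tile) :
    {p : Fin m × Fin n // ole ((p.1 : ℕ), (p.2 : ℕ)) a} → Tile :=
  fun p => M ⟨p.1, h _ p.2⟩

lemma subeq {m n : ℕ} {c : ℕ × ℕ} {p q : {p : Fin m × Fin n // ole ((p.1 : ℕ), (p.2 : ℕ)) c}}
    (h1 : (p.1.1 : ℕ) = (q.1.1 : ℕ)) (h2 : (p.1.2 : ℕ) = (q.1.2 : ℕ)) : p = q :=
  Subtype.ext (Prod.ext (Fin.ext h1) (Fin.ext h2))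

lemma res_mem (m n : ℕ) (a b : ℕ × ℕ) (hab : ∀ x : ℕ × ℕ, ole x a → ole x b)
    {M} (hM : M ∈ Quasi m n b.1 b.2) : resF m n a b hab M ∈ Quasi m n a.1 a.2 := by
  simp only [Quasi, Finset.mem_filter, Finset.mem_univ, true_and] at hM ⊢
  obtain ⟨h1, h2, h3⟩ := hM
  refine ⟨?_, ?_, ?_⟩
  · intro p q hpq; exact h1 ⟨p.1, hab _ p.2⟩ ⟨q.1, hab _ q.2⟩ hpq
  · intro p q hpq; exact h2 ⟨p.1, hab _ p.2⟩ ⟨q.1, hab _ q.2⟩ hpq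
  · intro p; exact h3 ⟨p.1, hab _ p.2⟩

lemma ext_mem (m n : ℕ) (a b : ℕ × ℕ) (hb1 : b.1 < m) (hb2 : b.2 < n)
    (hba : ∀ x : ℕ × ℕ, x.1 < m → x.2 < n → ole x b → ole x a ∨ x = b)
    {N : {p : Fin m × Fin n // ole ((p.1 : ℕ), (p.2 : ℕ)) (a.1, a.2)} → Tile}
    (hN : N ∈ Quasi m n a.1 a.2) (X : Tile)
    (hXl : ∀ pl, (pl.1.1 : ℕ) = b.1 → (pl.1.2 : ℕ) + 1 = b.2 → cpR (N pl) = cpL X)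
    (hXl0 : b.2 = 0 → cpL X = false)
    (hXt : ∀ pt, (pt.1.2 : ℕ) = b.2 → (pt.1.1 : ℕ) + 1 = b.1 → cpB (N pt) = cpT X)
    (hXt0 : b.1 = 0 → cpT X = false)
    (hXr : b.2 = n - 1 → cpR X = false)
    (hXb : b.1 = m - 1 → cpB X = false) :
    extF m n a b N X ∈ Quasi m n b.1 b.2 := by
  simp only [Quasi, Finset.mem_filter, Finset.mem_univ, true_and] at hN ⊢
  obtain ⟨h1, h2, h3⟩ := hN
  refine ⟨?_, ?_, ?_⟩
  · intro p q hpq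
    obtain ⟨e1, e2⟩ := hpq
    simp only [extF]
    by_cases hp : ole ((p.1.1 : ℕ), (p.1.2 : ℕ)) a <;>
      by_cases hq : ole ((q.1.1 : ℕ), (q.1.2 : ℕ)) a
    · rw [dif_pos hp, dif_pos hq]; exact h1 ⟨p.1, hp⟩ ⟨q.1, hq⟩ ⟨e1, e2⟩
    · rw [dif_pos hp, dif_neg hq]
      have hqb := (hba _ q.1.1.isLt q.1.2.isLt q.2).resolve_left hq
      have hqb1 : (q.1.1 : ℕ) = b.1 := congrArg Prod.fst hqb
      have hqb2 : (q.1.2 : ℕ) = b.2 := congrArg Prod.snd hqb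
      exact hXl ⟨p.1, hp⟩ (show (p.1.1 : ℕ) = b.1 by omega) (show (p.1.2 : ℕ) + 1 = b.2 by omega)
    · exfalso
      have hpb := (hba _ p.1.1.isLt p.1.2.isLt p.2).resolve_left hp
      have hpb1 : (p.1.1 : ℕ) = b.1 := congrArg Prod.fst hpb
      have hpb2 : (p.1.2 : ℕ) = b.2 := congrArg Prod.snd hpb
      have hq2 := q.2
      unfold ole at hq2
      omega
    · exfalso
      have hpb := (hba _ p.1.1.isLt p.1.2.isLt p.2).resolve_left hp
      have hqb := (hba _ q.1.1.isLt q.1.2.isLt q.2).resolve_left hq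
      have hpb2 : (p.1.2 : ℕ) = b.2 := congrArg Prod.snd hpb
      have hqb2 : (q.1.2 : ℕ) = b.2 := congrArg Prod.snd hqb
      omega
  · intro p q hpq
    obtain ⟨e1, e2⟩ := hpq
    simp only [extF]
    by_cases hp : ole ((p.1.1 : ℕ), (p.1.2 : ℕ)) a <;>
      by_cases hq : ole ((q.1.1 : ℕ), (q.1.2 : ℕ)) a
    · rw [dif_pos hp, dif_pos hq]; exact h2 ⟨p.1, hp⟩ ⟨q.1, hq⟩ ⟨e1, e2⟩
    · rw [dif_pos hp, dif_neg hq]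
      have hqb := (hba _ q.1.1.isLt q.1.2.isLt q.2).resolve_left hq
      have hqb1 : (q.1.1 : ℕ) = b.1 := congrArg Prod.fst hqb
      have hqb2 : (q.1.2 : ℕ) = b.2 := congrArg Prod.snd hqb
      exact hXt ⟨p.1, hp⟩ (show (p.1.2 : ℕ) = b.2 by omega) (show (p.1.1 : ℕ) + 1 = b.1 by omega)
    · exfalso
      have hpb := (hba _ p.1.1.isLt p.1.2.isLt p.2).resolve_left hp
      have hpb1 : (p.1.1 : ℕ) = b.1 := congrArg Prod.fst hpb
      have hpb2 : (p.1.2 : ℕ) = b.2 := congrArg Prod.snd hpb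
      have hq2 := q.2
      unfold ole at hq2
      omega
    · exfalso
      have hpb := (hba _ p.1.1.isLt p.1.2.isLt p.2).resolve_left hp
      have hqb := (hba _ q.1.1.isLt q.1.2.isLt q.2).resolve_left hq
      have hpb1 : (p.1.1 : ℕ) = b.1 := congrArg Prod.fst hpb
      have hqb1 : (q.1.1 : ℕ) = b.1 := congrArg Prod.fst hqb
      omega
  · intro p
    simp only [extF]
    by_cases hp : ole ((p.1.1 : ℕ), (p.1.2 : ℕ)) a
    · rw [dif_pos hp]; exact h3 ⟨p.1, hp⟩
    · rw [dif_neg hp]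
      have hpb := (hba _ p.1.1.isLt p.1.2.isLt p.2).resolve_left hp
      have hpb1 : (p.1.1 : ℕ) = b.1 := congrArg Prod.fst hpb
      have hpb2 : (p.1.2 : ℕ) = b.2 := congrArg Prod.snd hpb
      exact ⟨fun h => hXl0 (by omega), fun h => hXr (by omega),
        fun h => hXt0 (by omega), fun h => hXb (by omega)⟩

lemma res_ext (m n : ℕ) (a b : ℕ × ℕ) (hab : ∀ x : ℕ × ℕ, ole x a → ole x b)
    (N : {p : Fin m × Fin n // ole ((p.1 : ℕ), (p.2 : ℕ)) a} → Tile) (X : Tile) :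
    resF m n a b hab (extF m n a b N X) = N := by
  funext p
  simp only [resF, extF]
  rw [dif_pos p.2]

lemma ext_res (m n : ℕ) (a b : ℕ × ℕ) (hab : ∀ x : ℕ × ℕ, ole x a → ole x b)
    (hb1 : b.1 < m) (hb2 : b.2 < n)
    (hba : ∀ x : ℕ × ℕ, x.1 < m → x.2 < n → ole x b → ole x a ∨ x = b)
    (M : {p : Fin m × Fin n // ole ((p.1 : ℕ), (p.2 : ℕ)) b} → Tile) :
    extF m n a b (resF m n a b hab M)
      (M ⟨(⟨b.1, hb1⟩, ⟨b.2, hb2⟩), ole_refl _⟩) = M := by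
  funext p
  simp only [resF, extF]
  by_cases hp : ole ((p.1.1 : ℕ), (p.1.2 : ℕ)) a
  · rw [dif_pos hp]
  · rw [dif_neg hp]
    have hpb := (hba _ p.1.1.isLt p.1.2.isLt p.2).resolve_left hp
    have hpb1 : (p.1.1 : ℕ) = b.1 := congrArg Prod.fst hpb
    have hpb2 : (p.1.2 : ℕ) = b.2 := congrArg Prod.snd hpb
    exact congrArg M (subeq (show ((⟨b.1,hb1⟩ : Fin m) : ℕ) = (p.1.1 : ℕ) from hpb1.symm) (show ((⟨b.2,hb2⟩ : Fin n) : ℕ) = (p.1.2 : ℕ) from hpb2.symm))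

end Aux

/-- If b is the immediate successor of a in the antidiagonal order on the m×n array,
then |Q_a| ≤ |Q_b| ≤ 2·|Q_a|. -/
theorem quasi_growth (m n : ℕ) (hm : 4 ≤ m) (hn : 4 ≤ n) (a b : ℕ × ℕ)
    (ha1 : a.1 < m) (ha2 : a.2 < n) (hb1 : b.1 < m) (hb2 : b.2 < n)
    (hab : olt a b)
    (hpred : ∀ x : ℕ × ℕ, x.1 < m → x.2 < n → ¬(olt a x ∧ olt x b)) :
    (Quasi m n a.1 a.2).card ≤ (Quasi m n b.1 b.2).card ∧
    (Quasi m n b.1 b.2).card ≤ 2 * (Quasi m n a.1 a.2).card := by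
  have hab2 : ∀ x : ℕ × ℕ, ole x a → ole x b := fun x h => olt_ole (ole_olt_trans h hab)
  have hba2 : ∀ x : ℕ × ℕ, x.1 < m → x.2 < n → ole x b → ole x a ∨ x = b := by
    intro x h1 h2 h
    by_cases hxb : x = b
    · exact Or.inr hxb
    · exact Or.inl (by by_contra hna; exact hpred x h1 h2 ⟨not_ole hna, ole_ne_olt h hxb⟩)
  have hmemL : 0 < b.2 → ole ((b.1 : ℕ), b.2 - 1) a := by
    intro h
    rcases hba2 (b.1, b.2 - 1) hb1 (show b.2 - 1 < n by omega)
        (olt_ole (Or.inl (show b.1 + (b.2 - 1) < b.1 + b.2 by omega))) with hh | hh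
    · exact hh
    · exfalso; have := congrArg Prod.snd hh; simp only at this; omega
  have hmemT : 0 < b.1 → ole ((b.1 : ℕ) - 1, b.2) a := by
    intro h
    rcases hba2 (b.1 - 1, b.2) (show b.1 - 1 < m by omega) hb2
        (olt_ole (Or.inl (show b.1 - 1 + b.2 < b.1 + b.2 by omega))) with hh | hh
    · exact hh
    · exfalso; have := congrArg Prod.fst hh; simp only at this; omega
  -- parity at the corner
  have hpar : ∀ N, N ∈ Quasi m n a.1 a.2 → b.1 = m - 1 → b.2 = n - 1 →
      cpR (toTotal m n a N (b.1, b.2 - 1)) = cpB (toTotal m n a N (b.1 - 1, b.2)) := by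
    intro N hN hc1 hc2
    simp only [Quasi, Finset.mem_filter, Finset.mem_univ, true_and] at hN
    obtain ⟨h1, h2, h3⟩ := hN
    have hbeq : b = (m - 1, n - 1) := Prod.ext hc1 hc2
    have hregA : ∀ x : ℕ × ℕ, x.1 < m → x.2 < n → ¬(x.1 = m - 1 ∧ x.2 = n - 1) →
        ole x a := by
      intro x hx1 hx2 hxc
      have hxb : ole x b := by rw [hbeq]; unfold ole; dsimp only; omega
      rcases hba2 x hx1 hx2 hxb with h | h
      · exact h
      · exact absurd ⟨by rw [h, hbeq], by rw [h, hbeq]⟩ hxc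
    have hp := parity m n (by omega) (by omega) (toTotal m n a N)
      (by -- hH
        intro i j hi hj hc
        rw [toTotal_pos m n a N (i, j) hi (show j < n by omega)
              (hregA (i, j) hi (show j < n by omega) (show ¬(i = m - 1 ∧ j = n - 1) by omega)),
            toTotal_pos m n a N (i, j + 1) hi hj
              (hregA (i, j + 1) hi hj (show ¬(i = m - 1 ∧ j + 1 = n - 1) from hc))]
        exact h1 _ _ ⟨rfl, rfl⟩)
      (by -- hV
        intro i j hi hj hc
        rw [toTotal_pos m n a N (i, j) (show i < m by omega) hj
              (hregA (i, j) (show i < m by omega) hj (show ¬(i = m - 1 ∧ j = n - 1) by omega)),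
            toTotal_pos m n a N (i + 1, j) hi hj
              (hregA (i + 1, j) hi hj (show ¬(i + 1 = m - 1 ∧ j = n - 1) from hc))]
        exact h2 _ _ ⟨rfl, rfl⟩)
      (by -- hL
        intro i hi
        rw [toTotal_pos m n a N (i, 0) hi (show (0 : ℕ) < n by omega)
          (hregA (i, 0) hi (show (0 : ℕ) < n by omega) (show ¬(i = m - 1 ∧ 0 = n - 1) by omega))]
        exact (h3 _).1 rfl)
      (by -- hT
        intro j hj
        rw [toTotal_pos m n a N (0, j) (show (0 : ℕ) < m by omega) hj
          (hregA (0, j) (show (0 : ℕ) < m by omega) hj (show ¬(0 = m - 1 ∧ j = n - 1) by omega))]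
        exact (h3 _).2.2.1 rfl)
      (by -- hR
        intro i hi
        rw [toTotal_pos m n a N (i, n - 1) (show i < m by omega) (show n - 1 < n by omega)
          (hregA (i, n - 1) (show i < m by omega) (show n - 1 < n by omega)
            (show ¬(i = m - 1 ∧ n - 1 = n - 1) by omega))]
        exact (h3 _).2.1 rfl)
      (by -- hB
        intro j hj
        rw [toTotal_pos m n a N (m - 1, j) (show m - 1 < m by omega) (show j < n by omega)
          (hregA (m - 1, j) (show m - 1 < m by omega) (show j < n by omega)
            (show ¬(m - 1 = m - 1 ∧ j = n - 1) by omega))]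
        exact (h3 _).2.2.2 rfl)
    rw [show ((b.1 : ℕ), b.2 - 1) = (m - 1, n - 2) from
          Prod.ext (show b.1 = m - 1 from hc1) (show b.2 - 1 = n - 2 by omega),
        show ((b.1 : ℕ) - 1, b.2) = (m - 2, n - 1) from
          Prod.ext (show b.1 - 1 = m - 2 by omega) (show b.2 = n - 1 from hc2)]
    exact hp
  constructor
  · -- lower bound: extension is injective
    apply Finset.card_le_card_of_injOn
      (fun N => extF m n a b N
        (pick (if 0 < b.2 then cpR (toTotal m n a N (b.1, b.2 - 1)) else false)
              (if 0 < b.1 then cpB (toTotal m n a N (b.1 - 1, b.2)) else false)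
              (decide (b.2 = n - 1)) (decide (b.1 = m - 1))))
    · intro N hN
      obtain ⟨s1, s2, s3, s4⟩ :=
        pick_spec (if 0 < b.2 then cpR (toTotal m n a N (b.1, b.2 - 1)) else false)
          (if 0 < b.1 then cpB (toTotal m n a N (b.1 - 1, b.2)) else false)
          (decide (b.2 = n - 1)) (decide (b.1 = m - 1))
          (by
            intro hc1 hc2
            simp only [decide_eq_true_eq] at hc1 hc2
            rw [if_pos (show 0 < b.2 by omega), if_pos (show 0 < b.1 by omega)]
            exact hpar N hN hc2 hc1)
      apply ext_mem m n a b hb1 hb2 hba2 hN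
      · intro pl hl1 hl2
        rw [s1, if_pos (show 0 < b.2 by omega),
          show ((b.1 : ℕ), b.2 - 1) = ((pl.1.1 : ℕ), (pl.1.2 : ℕ)) from
            Prod.ext (show b.1 = (pl.1.1 : ℕ) from hl1.symm)
              (show b.2 - 1 = (pl.1.2 : ℕ) by omega),
          toTotal_eq]
      · intro h0; rw [s1, if_neg (by omega)]
      · intro pt ht1 ht2
        rw [s2, if_pos (show 0 < b.1 by omega),
          show ((b.1 : ℕ) - 1, b.2) = ((pt.1.1 : ℕ), (pt.1.2 : ℕ)) from
            Prod.ext (show b.1 - 1 = (pt.1.1 : ℕ) by omega)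
              (show b.2 = (pt.1.2 : ℕ) from ht1.symm),
          toTotal_eq]
      · intro h0; rw [s2, if_neg (by omega)]
      · intro hr; exact s3 (by simp [hr])
      · intro hbb; exact s4 (by simp [hbb])
    · intro N hN N' hN' hEE
      have h := congrArg (resF m n a b hab2) hEE
      rwa [res_ext, res_ext] at h
  · -- upper bound: restriction is at most 2-to-1
    apply Finset.card_le_mul_card_image_of_maps_to
      (fun M hM => res_mem m n a b hab2 hM) 2
    intro N hN
    calc (Finset.filter (fun M => resF m n a b hab2 M = N) (Quasi m n b.1 b.2)).card
        ≤ (Finset.univ.filter fun X : Tile =>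
            cpL X = (if 0 < b.2 then cpR (toTotal m n a N (b.1, b.2 - 1)) else false) ∧
            cpT X = (if 0 < b.1 then cpB (toTotal m n a N (b.1 - 1, b.2)) else false)).card := ?_
      _ ≤ 2 := tiles_le_two _ _
    apply Finset.card_le_card_of_injOn
      (fun M => M ⟨(⟨b.1, hb1⟩, ⟨b.2, hb2⟩), ole_refl _⟩)
    · intro M hM
      rw [Finset.mem_coe, Finset.mem_filter] at hM
      obtain ⟨hMb, hres⟩ := hM
      simp only [Quasi, Finset.mem_filter, Finset.mem_univ, true_and] at hMb
      obtain ⟨hM1, hM2, hM3⟩ := hMb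
      rw [Finset.mem_coe, Finset.mem_filter]
      refine ⟨Finset.mem_univ _, ?_, ?_⟩
      · rw [← hres]
        by_cases hb20 : 0 < b.2
        · rw [if_pos hb20]
          have key := hM1 ⟨(⟨b.1, hb1⟩, ⟨b.2 - 1, show b.2 - 1 < n by omega⟩),
              olt_ole (Or.inl (show b.1 + (b.2 - 1) < b.1 + b.2 by omega))⟩
            ⟨(⟨b.1, hb1⟩, ⟨b.2, hb2⟩), ole_refl _⟩
            ⟨rfl, show b.2 - 1 + 1 = b.2 by omega⟩
          rw [← key,
            toTotal_pos m n a (resF m n a b hab2 M) (b.1, b.2 - 1) hb1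
              (show b.2 - 1 < n by omega) (hmemL hb20)]
          rfl
        · rw [if_neg hb20]
          exact (hM3 _).1 (show b.2 = 0 by omega)
      · rw [← hres]
        by_cases hb10 : 0 < b.1
        · rw [if_pos hb10]
          have key := hM2 ⟨(⟨b.1 - 1, show b.1 - 1 < m by omega⟩, ⟨b.2, hb2⟩),
              olt_ole (Or.inl (show b.1 - 1 + b.2 < b.1 + b.2 by omega))⟩
            ⟨(⟨b.1, hb1⟩, ⟨b.2, hb2⟩), ole_refl _⟩
            ⟨rfl, show b.1 - 1 + 1 = b.1 by omega⟩
          rw [← key,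
            toTotal_pos m n a (resF m n a b hab2 M) (b.1 - 1, b.2)
              (show b.1 - 1 < m by omega) hb2 (hmemT hb10)]
          rfl
        · rw [if_neg hb10]
          exact (hM3 _).2.2.1 (show b.1 = 0 by omega)
    · intro M hM M' hM' hval
      rw [Finset.mem_coe, Finset.mem_filter] at hM hM'
      have e1 := ext_res m n a b hab2 hb1 hb2 hba2 M
      have e2 := ext_res m n a b hab2 hb1 hb2 hba2 M'
      rw [← e1, ← e2, hM.2, hM'.2]
      exact congrArg _ hval
end
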